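/- Let p : 𝕊 → ℝ≥0∞ be a measurable function taking only the values 0 and 1 that is a prefix-free indicator, and let s ∈ 𝕊 be any trace. Then the set function k(s, ·) on measurable sets S ⊆ 𝕊 given by k(s, S) = ∫⁻_{prepend_s⁻¹(S)} p dμ_𝕊, i.e. the pushforward along prepend_s of the measure μ_𝕊.withDensity p, is a sub-probability measure on 𝕊: it is a measure with total mass k(s, 𝕊) ≤ 1. -/

import Mathlib

open MeasureTheory ENNReal

/-- The trace space: finite sequences of reals of arbitrary length. -/
abbrev Trace : Type := Σ n : ℕ, (Fin n → ℝ)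

/-- The trace measure on `Trace`: the sum over `n` of the pushforwards along `Sigma.mk n` of
`n`-dimensional Lebesgue measure restricted to the unit cube. -/
noncomputable def traceMeasure : Measure Trace :=
  Measure.sum fun n : ℕ =>
    Measure.map (Sigma.mk n)
      (volume.restrict {f : Fin n → ℝ | ∀ i, f i ∈ Set.Icc (0 : ℝ) 1})

/-- `s'` is a proper prefix of `s`: it is strictly shorter and agrees with `s` on its
first coordinates. -/
def ProperPrefix (s' s : Trace) : Prop :=
  ∃ h : s'.1 < s.1, ∀ i : Fin s'.1, s'.2 i = s.2 (Fin.castLE h.le i)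

/-- `p` is a prefix-free indicator: it is measurable, takes only the values `0` and `1`, and
whenever `p s = 1` then `p s' = 0` for every proper prefix `s'` of `s` and every proper
extension `s'` of `s`. -/
def IsPrefixFreeIndicator (p : Trace → ℝ≥0∞) : Prop :=
  Measurable p ∧ (∀ s : Trace, p s = 0 ∨ p s = 1) ∧
    ∀ s : Trace, p s = 1 → ∀ s' : Trace, (ProperPrefix s' s ∨ ProperPrefix s s') → p s' = 0

/-- Prepending a fixed trace `s` to a trace: concatenation `s ∗ s'`. -/
def prepend (s : Trace) : Trace → Trace :=
  fun s' => ⟨s.1 + s'.1, Fin.append s.2 s'.2⟩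

namespace BootstrapAux

lemma measurable_mk (n : ℕ) :
    Measurable (@Sigma.mk ℕ (fun n => Fin n → ℝ) n) :=
  Measurable.of_le_map (iInf_le _ n)

/-- The unit cube in dimension `n`. -/
def cube (n : ℕ) : Set (Fin n → ℝ) := Set.pi Set.univ fun _ => Set.Icc (0 : ℝ) 1

lemma cube_eq (n : ℕ) : {f : Fin n → ℝ | ∀ i, f i ∈ Set.Icc (0 : ℝ) 1} = cube n := by
  ext f; simp only [cube, Set.mem_pi, Set.mem_univ, forall_true_left, Set.mem_setOf_eq]

lemma measurableSet_cube (n : ℕ) : MeasurableSet (cube n) :=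
  MeasurableSet.univ_pi fun _ => measurableSet_Icc

lemma volume_cube (n : ℕ) : volume (cube n) = 1 := by
  rw [cube, volume_pi_pi]
  simp [Real.volume_Icc]

variable (p : Trace → ℝ≥0∞)

/-- The "accepted" set in dimension `n`. -/
def A (n : ℕ) : Set (Fin n → ℝ) := {f | p ⟨n, f⟩ = 1} ∩ cube n

lemma measurableSet_A (hm : Measurable p) (n : ℕ) : MeasurableSet (A p n) :=
  (((hm.comp (measurable_mk n)) (measurableSet_singleton 1))).inter (measurableSet_cube n)

/-- The "hit" set in dimension `N`: cube points some prefix of which is accepted. -/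
def B : (N : ℕ) → Set (Fin N → ℝ)
  | 0 => A p 0
  | N + 1 =>
      ((fun f : Fin (N + 1) → ℝ => f ∘ Fin.castSucc) ⁻¹' B N ∩
        (fun f : Fin (N + 1) → ℝ => f (Fin.last N)) ⁻¹' Set.Icc (0 : ℝ) 1) ∪ A p (N + 1)

lemma measurableSet_B (hm : Measurable p) : ∀ N, MeasurableSet (B p N)
  | 0 => measurableSet_A p hm 0
  | N + 1 => by
      refine MeasurableSet.union (MeasurableSet.inter ?_ ?_) (measurableSet_A p hm (N + 1))
      · exact (measurable_pi_iff.2 fun j => measurable_pi_apply _) (measurableSet_B hm N)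
      · exact (measurable_pi_apply _) measurableSet_Icc

lemma B_subset_cube : ∀ N, B p N ⊆ cube N
  | 0 => Set.inter_subset_right
  | N + 1 => by
      rintro f (⟨h1, h2⟩ | hf)
      · intro i _
        refine Fin.lastCases ?_ (fun j => ?_) i
        · exact h2
        · exact B_subset_cube N h1 j (Set.mem_univ j)
      · exact hf.2

lemma p_congr {n : ℕ} {f g : Fin n → ℝ} (h : ∀ i, f i = g i) :
    p ⟨n, f⟩ = p ⟨n, g⟩ := by rw [show f = g from funext h]

lemma B_hit : ∀ N, ∀ f ∈ B p N, ∃ n, ∃ hn : n ≤ N,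
    p ⟨n, fun i : Fin n => f (Fin.castLE hn i)⟩ = 1
  | 0, f, hf => ⟨0, le_rfl,
      (p_congr p fun i => congrArg f (Fin.ext rfl)).trans hf.1⟩
  | N + 1, f, hf => by
      rcases hf with ⟨h1, _⟩ | hf
      · obtain ⟨n, hn, hp1⟩ := B_hit N _ h1
        exact ⟨n, hn.trans (Nat.le_succ N),
          (p_congr p fun i => congrArg f (Fin.ext rfl)).trans hp1⟩
      · exact ⟨N + 1, le_rfl,
          (p_congr p fun i => congrArg f (Fin.ext rfl)).trans hf.1⟩

lemma volume_B (hm : Measurable p)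
    (hpf : ∀ s : Trace, p s = 1 → ∀ s' : Trace,
      (ProperPrefix s' s ∨ ProperPrefix s s') → p s' = 0) :
    ∀ N, volume (B p N) = ∑ n ∈ Finset.range (N + 1), volume (A p n)
  | 0 => by simp [B]
  | N + 1 => by
      have hdisj : Disjoint
          ((fun f : Fin (N + 1) → ℝ => f ∘ Fin.castSucc) ⁻¹' B p N ∩
            (fun f : Fin (N + 1) → ℝ => f (Fin.last N)) ⁻¹' Set.Icc (0 : ℝ) 1)
          (A p (N + 1)) := by
        rw [Set.disjoint_left]
        rintro f ⟨h1, _⟩ hfA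
        obtain ⟨n, hn, hp1⟩ := B_hit p N _ h1
        have hlt : n < N + 1 := Nat.lt_succ_of_le hn
        have hpre : ProperPrefix ⟨n, fun i : Fin n => f (Fin.castLE hlt.le i)⟩ ⟨N + 1, f⟩ :=
          ⟨hlt, fun i => rfl⟩
        have h0 := hpf ⟨N + 1, f⟩ hfA.1 _ (Or.inl hpre)
        have : p ⟨n, fun i : Fin n => f (Fin.castLE hlt.le i)⟩ = 1 :=
          (p_congr p fun i => congrArg f (Fin.ext rfl)).trans hp1
        rw [h0] at this
        exact zero_ne_one this
      have hBmeas : MeasurableSet (A p (N + 1)) := measurableSet_A p hm (N + 1)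
      rw [B, measure_union hdisj hBmeas]
      have hpres := volume_preserving_piFinSuccAbove (fun _ : Fin (N + 1) => ℝ) (Fin.last N)
      have hset : ((fun f : Fin (N + 1) → ℝ => f ∘ Fin.castSucc) ⁻¹' B p N ∩
            (fun f : Fin (N + 1) → ℝ => f (Fin.last N)) ⁻¹' Set.Icc (0 : ℝ) 1)
          = (MeasurableEquiv.piFinSuccAbove (fun _ : Fin (N + 1) => ℝ) (Fin.last N)) ⁻¹'
            (Set.Icc (0 : ℝ) 1 ×ˢ B p N) := by
        ext f
        have hrem : (Fin.last N).removeNth f = f ∘ Fin.castSucc := by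
          funext j; simp [Fin.removeNth, Fin.succAbove_last]
        simp only [Set.mem_inter_iff, Set.mem_preimage, MeasurableEquiv.piFinSuccAbove,
          MeasurableEquiv.coe_mk, Equiv.symm_symm, Fin.insertNthEquiv_symm_apply, hrem,
          Set.mem_prod, and_comm]
        change _ ↔ f (Fin.last N) ∈ _ ∧ (Fin.last N).removeNth f ∈ _
        rw [hrem]
      rw [hset, hpres.measure_preimage
          ((measurableSet_Icc.prod (measurableSet_B p hm N)).nullMeasurableSet)]
      rw [Measure.volume_eq_prod, Measure.prod_prod, Real.volume_Icc, volume_B hm hpf N]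
      rw [Finset.sum_range_succ (f := fun n => volume (A p n)) (n := N + 1)]
      norm_num

lemma lintegral_trace (hm : Measurable p) (hp01 : ∀ s : Trace, p s = 0 ∨ p s = 1) :
    ∫⁻ s, p s ∂traceMeasure = ∑' n, volume (A p n) := by
  rw [traceMeasure, lintegral_sum_measure]
  congr 1
  ext n
  rw [lintegral_map hm (measurable_mk n)]
  have hs : MeasurableSet {f : Fin n → ℝ | p ⟨n, f⟩ = 1} :=
    (hm.comp (measurable_mk n)) (measurableSet_singleton 1)
  calc ∫⁻ f, p ⟨n, f⟩ ∂(volume.restrict {f : Fin n → ℝ | ∀ i, f i ∈ Set.Icc (0 : ℝ) 1})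
      = ∫⁻ f, Set.indicator {f : Fin n → ℝ | p ⟨n, f⟩ = 1} (fun _ => (1 : ℝ≥0∞)) f
          ∂(volume.restrict {f : Fin n → ℝ | ∀ i, f i ∈ Set.Icc (0 : ℝ) 1}) := by
        refine lintegral_congr fun f => ?_
        rcases hp01 ⟨n, f⟩ with h | h <;> simp [Set.indicator, h]
    _ = volume (A p n) := by
        rw [lintegral_indicator hs, setLIntegral_one, Measure.restrict_apply hs, cube_eq]
        rfl

end BootstrapAux

/-- For a prefix-free indicator `p` and any trace `s`, the pushforward along `prepend s` of the
measure `traceMeasure.withDensity p` (i.e. `S ↦ ∫⁻_{prepend s ⁻¹' S} p ∂μ_𝕊`) is a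
sub-probability measure: its total mass is at most `1`. -/
theorem bootstrap_kernel_subprobability (p : Trace → ℝ≥0∞) (hp : IsPrefixFreeIndicator p)
    (s : Trace) :
    ((traceMeasure.withDensity p).map (prepend s)) Set.univ ≤ 1 := by
  obtain ⟨hm, hp01, hpf⟩ := hp
  by_cases hmeas : AEMeasurable (prepend s) (traceMeasure.withDensity p)
  · rw [Measure.map_apply_of_aemeasurable hmeas MeasurableSet.univ, Set.preimage_univ,
      withDensity_apply _ MeasurableSet.univ, Measure.restrict_univ]
    rw [BootstrapAux.lintegral_trace p hm hp01]
    rw [ENNReal.tsum_eq_iSup_sum]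
    refine iSup_le fun t => ?_
    classical
    obtain ⟨N, hN⟩ : ∃ N, t ⊆ Finset.range (N + 1) := by
      rcases t.eq_empty_or_nonempty with rfl | ht
      · exact ⟨0, by simp⟩
      · exact ⟨t.max' ht, fun x hx => Finset.mem_range.2
          (Nat.lt_succ_of_le (t.le_max' x hx))⟩
    calc ∑ n ∈ t, volume (BootstrapAux.A p n)
        ≤ ∑ n ∈ Finset.range (N + 1), volume (BootstrapAux.A p n) :=
          Finset.sum_le_sum_of_subset hN
      _ = volume (BootstrapAux.B p N) := (BootstrapAux.volume_B p hm hpf N).symm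
      _ ≤ volume (BootstrapAux.cube N) := measure_mono (BootstrapAux.B_subset_cube p N)
      _ = 1 := BootstrapAux.volume_cube N
  · rw [Measure.map_of_not_aemeasurable hmeas]
    simp
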